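/- Let K ≥ 1 be an integer, δ ∈ (0,1), L = ln(3/δ), and β = 18·L·K². For each j ∈ {1,…,K} let n_j ≥ 1 be an integer, α_j = min(β/n_j, 1/2), let p̂_j ∈ [α_j, 1−α_j], and let p_j ∈ [0,1] satisfy |p̂_j − p_j| ≤ √(2·p̂_j(1−p̂_j)·L/n_j) + 3L/n_j. Then Π_{j=1}^K ( p_j·√((1−p̂_j)/p̂_j) + (1−p_j)·√(p̂_j/(1−p̂_j)) ) ≤ (3/2)·exp(−2 Σ_{j=1}^K (1/2 − p̂_j)²). -/

import Mathlib

open Real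

set_option maxHeartbeats 1000000 in

lemma key_term (K n : ℕ) (hK : 1 ≤ K) (hn : 1 ≤ n) (L : ℝ) (hL : 0 < L)
    (q p : ℝ)
    (hq1 : min (18 * L * (K:ℝ) ^ 2 / (n:ℝ)) (1/2) ≤ q)
    (hq2 : q ≤ 1 - min (18 * L * (K:ℝ) ^ 2 / (n:ℝ)) (1/2))
    (hp0 : 0 ≤ p) (hp1 : p ≤ 1)
    (herr : |q - p| ≤ Real.sqrt (2 * q * (1 - q) * L / n) + 3 * L / n) :
    p * Real.sqrt ((1 - q) / q) + (1 - p) * Real.sqrt (q / (1 - q))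
      ≤ (1 + ((Real.sqrt 2 + 1)/6) / K) * Real.exp (-2 * (1/2 - q)^2) := by
  have hn' : (0:ℝ) < n := by exact_mod_cast hn
  have hK' : (1:ℝ) ≤ K := by exact_mod_cast hK
  have hK0 : (0:ℝ) < K := by linarith
  have hαpos : 0 < min (18 * L * (K:ℝ) ^ 2 / (n:ℝ)) (1/2) := by
    apply lt_min (by positivity) (by norm_num)
  have hq0 : 0 < q := lt_of_lt_of_le hαpos hq1
  have hq1' : q < 1 := by linarith
  have h1q : (0:ℝ) < 1 - q := by linarith
  have hm : 0 < q * (1 - q) := by nlinarith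
  set G := Real.sqrt (q * (1 - q)) with hGdef
  have hG : 0 < G := Real.sqrt_pos.2 hm
  have hGG : G * G = q * (1 - q) := Real.mul_self_sqrt hm.le
  have hs2 : Real.sqrt 2 ≥ 0 := Real.sqrt_nonneg 2
  -- exact expression
  have ha : Real.sqrt ((1 - q) / q) = G / q := by
    rw [hGdef, show q * (1 - q) = (1 - q) / q * q ^ 2 by field_simp,
      Real.sqrt_mul (div_nonneg h1q.le hq0.le), Real.sqrt_sq hq0.le]
    field_simp
  have hb : Real.sqrt (q / (1 - q)) = G / (1 - q) := by
    rw [hGdef, show q * (1 - q) = q / (1 - q) * (1 - q) ^ 2 by field_simp,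
      Real.sqrt_mul (div_nonneg hq0.le h1q.le), Real.sqrt_sq h1q.le]
    field_simp
  have key1 : p * Real.sqrt ((1 - q) / q) + (1 - p) * Real.sqrt (q / (1 - q))
      = 2 * G + (p - q) * ((1 - 2*q) / G) := by
    rw [ha, hb]
    field_simp
    linear_combination (p - 2*p*q - q + 2*q^2) * hGG
  -- error term bound
  have hstep : (p - q) * ((1 - 2*q) / G) ≤ 2 * G * (((Real.sqrt 2 + 1)/6) / K) := by
    by_cases hcase : 18 * L * (K:ℝ) ^ 2 / (n:ℝ) ≤ 1/2
    · have hmin : min (18 * L * (K:ℝ) ^ 2 / (n:ℝ)) (1/2) = 18 * L * (K:ℝ) ^ 2 / (n:ℝ) :=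
        min_eq_left hcase
      rw [hmin] at hq1 hq2
      have hb1 : 18 * L * (K:ℝ)^2 ≤ n * q := by
        rw [div_le_iff₀ hn'] at hq1; linarith
      have hb2 : 18 * L * (K:ℝ)^2 ≤ n * (1 - q) := by
        have : 18 * L * (K:ℝ)^2 / n ≤ 1 - q := by linarith
        rw [div_le_iff₀ hn'] at this; linarith
      have hmlb : 9 * L * (K:ℝ)^2 ≤ n * (q * (1 - q)) := by
        rcases le_or_gt q (1/2) with h | h
        · nlinarith
        · nlinarith
      -- bound the two error pieces
      have hε1 : Real.sqrt (2 * q * (1 - q) * L / n)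
          ≤ Real.sqrt 2 * (q * (1 - q)) / (3 * K) := by
        have harg : 2 * q * (1 - q) * L / n ≤ (Real.sqrt 2 * (q * (1 - q)) / (3 * K))^2 := by
          have hsq : (Real.sqrt 2 * (q * (1 - q)) / (3 * K))^2
              = 2 * (q * (1-q))^2 / (9 * K^2) := by
            rw [div_pow, mul_pow, Real.sq_sqrt (by norm_num : (0:ℝ) ≤ 2)]
            ring_nf
          rw [hsq, div_le_div_iff₀ hn' (by positivity)]
          nlinarith [mul_le_mul_of_nonneg_left hmlb (le_of_lt hm)]
        calc Real.sqrt (2 * q * (1 - q) * L / n)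
            ≤ Real.sqrt ((Real.sqrt 2 * (q * (1 - q)) / (3 * K))^2) := Real.sqrt_le_sqrt harg
          _ = Real.sqrt 2 * (q * (1 - q)) / (3 * K) := Real.sqrt_sq (by positivity)
      have hε2 : 3 * L / n ≤ (q * (1 - q)) / (3 * K^2) := by
        rw [div_le_div_iff₀ hn' (by positivity)]
        nlinarith
      have herrtot : |q - p| ≤ (q * (1 - q)) * ((Real.sqrt 2 + 1) / (3 * K)) := by
        have h3 : (q * (1 - q)) / (3 * K^2) ≤ (q * (1 - q)) / (3 * K) := by
          apply div_le_div_of_nonneg_left hm.le (by positivity)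
          nlinarith
        calc |q - p| ≤ Real.sqrt (2 * q * (1 - q) * L / n) + 3 * L / n := herr
          _ ≤ Real.sqrt 2 * (q * (1 - q)) / (3 * K) + (q * (1 - q)) / (3 * K) := by
              linarith
          _ = (q * (1 - q)) * ((Real.sqrt 2 + 1) / (3 * K)) := by ring
      have h3 : |1 - 2*q| ≤ 1 := by rw [abs_le]; constructor <;> linarith
      have habs : (p - q) * ((1 - 2*q) / G) ≤ |q - p| * (1 / G) := by
        have h1 : (p - q) * ((1 - 2*q) / G) ≤ |(p - q) * ((1 - 2*q) / G)| := le_abs_self _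
        have h2 : |(p - q) * ((1 - 2*q) / G)| = |p - q| * (|1 - 2*q| / G) := by
          rw [abs_mul, abs_div, abs_of_pos hG]
        have h4 : |p - q| = |q - p| := abs_sub_comm p q
        calc (p - q) * ((1 - 2*q) / G) ≤ |p - q| * (|1 - 2*q| / G) := by rw [← h2]; exact h1
          _ ≤ |q - p| * (1 / G) := by rw [h4]; gcongr
      calc (p - q) * ((1 - 2*q) / G) ≤ |q - p| * (1 / G) := habs
        _ ≤ ((q * (1 - q)) * ((Real.sqrt 2 + 1) / (3 * K))) * (1 / G) :=
            mul_le_mul_of_nonneg_right herrtot (by positivity)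
        _ = 2 * G * (((Real.sqrt 2 + 1)/6) / K) := by
            rw [← hGG]; field_simp; ring
    · have hmin : min (18 * L * (K:ℝ) ^ 2 / (n:ℝ)) (1/2) = 1/2 :=
        min_eq_right (le_of_not_ge hcase)
      rw [hmin] at hq1 hq2
      have hq : q = 1/2 := le_antisymm (by linarith) hq1
      rw [hq]
      norm_num
      positivity
  have hexp : 2 * G ≤ Real.exp (-2 * (1/2 - q)^2) := by
    have he : (Real.exp (-2 * (1/2 - q)^2))^2 = Real.exp (-4 * (1/2 - q)^2) := by
      rw [sq, ← Real.exp_add]; ring_nf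
    have h4 : (2*G)^2 ≤ (Real.exp (-2 * (1/2 - q)^2))^2 := by
      rw [he]
      have hb' := Real.add_one_le_exp (-4 * (1/2 - q)^2)
      nlinarith [hGG]
    calc 2*G = Real.sqrt ((2*G)^2) := (Real.sqrt_sq (by positivity)).symm
      _ ≤ Real.sqrt ((Real.exp (-2 * (1/2 - q)^2))^2) := Real.sqrt_le_sqrt h4
      _ = Real.exp (-2 * (1/2 - q)^2) := Real.sqrt_sq (Real.exp_nonneg _)
  calc p * Real.sqrt ((1 - q) / q) + (1 - p) * Real.sqrt (q / (1 - q))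
      = 2 * G + (p - q) * ((1 - 2*q) / G) := key1
    _ ≤ 2 * G + 2 * G * (((Real.sqrt 2 + 1)/6) / K) := by linarith
    _ = (1 + ((Real.sqrt 2 + 1)/6) / K) * (2 * G) := by ring
    _ ≤ (1 + ((Real.sqrt 2 + 1)/6) / K) * Real.exp (-2 * (1/2 - q)^2) :=
        mul_le_mul_of_nonneg_left hexp (by positivity)

/-- Let `K ≥ 1`, `δ ∈ (0,1)`, `L = ln(3/δ)`, `β = 18LK²`. For each `j`
let `n_j ≥ 1`, `α_j = min(β/n_j, 1/2)`, `p̂_j ∈ [α_j, 1−α_j]`, and `p_j ∈ [0,1]` with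
`|p̂_j − p_j| ≤ √(2 p̂_j(1−p̂_j) L/n_j) + 3L/n_j`. Then
`∏_j (p_j √((1−p̂_j)/p̂_j) + (1−p_j) √(p̂_j/(1−p̂_j))) ≤ (3/2)·exp(−2 ∑_j (1/2−p̂_j)²)`. -/
theorem stmt5 (K : ℕ) (hK : 1 ≤ K) (δ : ℝ) (hδ : δ ∈ Set.Ioo (0:ℝ) 1)
    (L β : ℝ) (hL : L = Real.log (3/δ)) (hβ : β = 18 * L * K^2)
    (n : Fin K → ℕ) (hn : ∀ j, 1 ≤ n j)
    (α : Fin K → ℝ) (hα : ∀ j, α j = min (β / n j) (1/2))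
    (phat p : Fin K → ℝ)
    (hphat : ∀ j, phat j ∈ Set.Icc (α j) (1 - α j))
    (hp : ∀ j, p j ∈ Set.Icc (0:ℝ) 1)
    (herr : ∀ j, |phat j - p j|
      ≤ Real.sqrt (2 * phat j * (1 - phat j) * L / n j) + 3 * L / n j) :
    (∏ j, (p j * Real.sqrt ((1 - phat j) / phat j)
        + (1 - p j) * Real.sqrt (phat j / (1 - phat j))))
      ≤ (3/2) * Real.exp (-2 * ∑ j, (1/2 - phat j)^2) := by
  have hL0 : 0 < L := by
    rw [hL]
    apply Real.log_pos
    rw [lt_div_iff₀ hδ.1]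
    linarith [hδ.2]
  have hs2 := Real.sqrt_nonneg 2
  have hK' : (1:ℝ) ≤ K := by exact_mod_cast hK
  set c : ℝ := (Real.sqrt 2 + 1)/6 with hc
  have hterm : ∀ j, p j * Real.sqrt ((1 - phat j) / phat j)
      + (1 - p j) * Real.sqrt (phat j / (1 - phat j))
      ≤ (1 + c/K) * Real.exp (-2 * (1/2 - phat j)^2) := by
    intro j
    apply key_term K (n j) hK (hn j) L hL0
    · have := (hphat j).1; rw [hα j, hβ] at this; exact this
    · have := (hphat j).2; rw [hα j, hβ] at this; exact this
    · exact (hp j).1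
    · exact (hp j).2
    · exact herr j
  have hnn : ∀ j ∈ Finset.univ, 0 ≤ p j * Real.sqrt ((1 - phat j) / phat j)
      + (1 - p j) * Real.sqrt (phat j / (1 - phat j)) := by
    intro j _
    have h1 := (hp j).1
    have h2 := (hp j).2
    have := Real.sqrt_nonneg ((1 - phat j) / phat j)
    have := Real.sqrt_nonneg (phat j / (1 - phat j))
    apply add_nonneg (mul_nonneg h1 (by assumption)) (mul_nonneg (by linarith) (by assumption))
  calc (∏ j, (p j * Real.sqrt ((1 - phat j) / phat j)
        + (1 - p j) * Real.sqrt (phat j / (1 - phat j))))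
      ≤ ∏ j, ((1 + c/K) * Real.exp (-2 * (1/2 - phat j)^2)) :=
        Finset.prod_le_prod hnn (fun j _ => hterm j)
    _ = (1 + c/K)^K * Real.exp (-2 * ∑ j, (1/2 - phat j)^2) := by
        rw [Finset.prod_mul_distrib, Finset.prod_const, Finset.card_univ, Fintype.card_fin]
        congr 1
        rw [← Real.exp_sum]
        congr 1
        exact (Finset.mul_sum _ _ _).symm
    _ ≤ (3/2) * Real.exp (-2 * ∑ j, (1/2 - phat j)^2) := by
        apply mul_le_mul_of_nonneg_right _ (Real.exp_nonneg _)
        have hcK : 0 ≤ c/K := by positivity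
        have h1 : 1 + c/K ≤ Real.exp (c/K) := by linarith [Real.add_one_le_exp (c/K)]
        have h2 : (1 + c/K)^K ≤ Real.exp (c/K)^K := pow_le_pow_left₀ (by linarith) h1 K
        have h3 : Real.exp (c/K)^K = Real.exp c := by
          rw [← Real.exp_nat_mul]
          congr 1
          field_simp
        have h4 : c ≤ 0.403 := by
          have hle : Real.sqrt 2 ≤ 1.418 := by
            nlinarith [Real.sq_sqrt (by norm_num : (0:ℝ) ≤ 2), Real.sqrt_nonneg 2]
          rw [hc]; linarith
        have h5 : Real.exp c ≤ Real.exp 0.403 := Real.exp_le_exp.mpr h4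
        have h6 : Real.exp 0.403 ≤ 3/2 := by
          have h := Real.exp_bound' (by norm_num : (0:ℝ) ≤ 0.403) (by norm_num)
            (n := 4) (by norm_num)
          norm_num [Finset.sum_range_succ, Nat.factorial] at h
          linarith
        calc (1 + c/K)^K ≤ Real.exp (c/K)^K := h2
          _ = Real.exp c := h3
          _ ≤ 3/2 := le_trans h5 h6
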